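/- Let V be an N-module that is generated in degrees ≤ n with respect to the sup norm (n ∈ ℕ). Then for every x ∈ N and every index i with x(i) ≥ n, the transition map V_x → V_{x+e_i} is surjective. -/

import Mathlib

open CategoryTheory

/-- The poset `ℕ →₀ ℕ` of finitely supported sequences of naturals, with pointwise order,
regarded as a thin category. -/
abbrev NPoset := ℕ →₀ ℕ

/-- The sup norm of `x : ℕ →₀ ℕ` is `max_i x i`. -/
noncomputable def supNorm (x : NPoset) : ℕ := x.support.sup x

/-- An `N`-module `V` is generated in degrees `≤ n` with respect to a norm if, for every `z`,
`V_z` is the sum of the images of the transition maps from objects `y ≤ z` of norm `≤ n`. -/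
def GeneratedInDeg {k : Type} [CommRing k] (norm : NPoset → ℕ)
    (V : NPoset ⥤ ModuleCat k) (n : ℕ) : Prop :=
  ∀ z : NPoset,
    (⨆ (y : NPoset) (h : y ≤ z) (_ : norm y ≤ n),
      LinearMap.range (V.map (homOfLE h)).hom) = ⊤

/-- If `V` is generated in degrees `≤ n` with respect to the sup norm, then for every `x` and
every direction `i` with `x i ≥ n`, the transition map `V_x → V_{x + e_i}` is surjective. -/
theorem stmt0 {k : Type} [CommRing k] (V : NPoset ⥤ ModuleCat k) (n : ℕ)
    (hV : GeneratedInDeg supNorm V n) (x : NPoset) (i : ℕ) (hx : n ≤ x i)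
    (h : x ≤ x + Finsupp.single i 1) :
    Function.Surjective (V.map (homOfLE h)) := by
  rw [← LinearMap.range_eq_top, ← top_le_iff, ← hV (x + Finsupp.single i 1)]
  refine iSup_le fun y => iSup_le fun hy => iSup_le fun hny => ?_
  have hyx : y ≤ x := by
    rw [Finsupp.le_def]
    intro j
    by_cases hj : j = i
    · subst hj
      refine le_trans ?_ hx
      by_cases hs : j ∈ y.support
      · exact le_trans (Finset.le_sup hs) hny
      · simp [Finsupp.notMem_support_iff.mp hs]
    · have := Finsupp.le_def.mp hy j
      simpa [Finsupp.single_apply, Ne.symm hj] using this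
  have heq : homOfLE hy = homOfLE hyx ≫ homOfLE h := rfl
  rw [heq, V.map_comp, ModuleCat.hom_comp]
  exact LinearMap.range_comp_le_range _ _
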